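/- Suppose λ_{i,1}·λ_{j,2} + η ≠ 0 for all i, j. Then for any n1×n2 real matrix Y and any real number μ, the predictive-mean correction satisfies (R2 ⊗ R1)·R̃⁻¹·(vec(Y) − μ·1_N) = vec(U1·Λ1·Ỹ0·Λ2·U2ᵀ), where Ỹ0 is the n1×n2 matrix whose (i,j) entry is Ỹ_{i,j} / (λ_{i,1}·λ_{j,2} + η) and Ỹ_{i,j} is the (i,j) entry of U1ᵀ·(Y − μ·J)·U2, with J the n1×n2 all-ones matrix. -/

import Mathlib

open Matrix
open scoped Kronecker

/-- Column-stacking vectorization: the entry of `vec Y` at index `(j, i)` is `Y i j`. -/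
def vec {n1 n2 : ℕ} (Y : Matrix (Fin n1) (Fin n2) ℝ) : Fin n2 × Fin n1 → ℝ :=
  fun p => Y p.2 p.1

lemma vec_conj {n1 n2 : ℕ} (A : Matrix (Fin n1) (Fin n1) ℝ)
    (B : Matrix (Fin n2) (Fin n2) ℝ) (X : Matrix (Fin n1) (Fin n2) ℝ) :
    _root_.vec (A * X * Bᵀ) = (B ⊗ₖ A) *ᵥ _root_.vec X := by
  funext p
  obtain ⟨j, i⟩ := p
  simp only [_root_.vec, mulVec, Matrix.mul_apply, kroneckerMap_apply, dotProduct,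
    Fintype.sum_prod_type, transpose_apply, Finset.sum_mul, Finset.mul_sum]
  apply Finset.sum_congr rfl
  intro j' _
  apply Finset.sum_congr rfl
  intro i' _
  ring

lemma diag_mulVec {N : Type*} [Fintype N] [DecidableEq N] (d : N → ℝ) (v : N → ℝ) :
    Matrix.diagonal d *ᵥ v = fun p => d p * v p := by
  funext p
  simp [mulVec, diagonal, dotProduct, Finset.sum_ite_eq]

theorem stmt12 (n1 n2 : ℕ) (hn1 : 0 < n1) (hn2 : 0 < n2)
    (R1 U1 : Matrix (Fin n1) (Fin n1) ℝ) (R2 U2 : Matrix (Fin n2) (Fin n2) ℝ)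
    (lam1 : Fin n1 → ℝ) (lam2 : Fin n2 → ℝ)
    (hR1sym : R1.IsSymm) (hR2sym : R2.IsSymm)
    (hU1 : U1 * U1ᵀ = 1) (hU1' : U1ᵀ * U1 = 1)
    (hU2 : U2 * U2ᵀ = 1) (hU2' : U2ᵀ * U2 = 1)
    (hR1 : R1 = U1 * Matrix.diagonal lam1 * U1ᵀ)
    (hR2 : R2 = U2 * Matrix.diagonal lam2 * U2ᵀ)
    (η : ℝ)
    (hnz : ∀ (i : Fin n1) (j : Fin n2), lam1 i * lam2 j + η ≠ 0)
    (Y : Matrix (Fin n1) (Fin n2) ℝ) (μ : ℝ) :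
    (R2 ⊗ₖ R1) *ᵥ
        ((R2 ⊗ₖ R1 + η • (1 : Matrix (Fin n2 × Fin n1) (Fin n2 × Fin n1) ℝ))⁻¹ *ᵥ
          (_root_.vec Y - μ • (fun _ : Fin n2 × Fin n1 => (1 : ℝ))))
      = _root_.vec (U1 * Matrix.diagonal lam1 *
          (Matrix.of fun i j =>
            ((U1ᵀ * (Y - μ • (Matrix.of fun _ _ => (1 : ℝ) : Matrix (Fin n1) (Fin n2) ℝ)) * U2) i j)
              / (lam1 i * lam2 j + η)) *
          Matrix.diagonal lam2 * U2ᵀ) := by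
  set J : Matrix (Fin n1) (Fin n2) ℝ := Matrix.of fun _ _ => (1 : ℝ) with hJ
  set Z : Matrix (Fin n1) (Fin n2) ℝ := Y - μ • J with hZ
  set d : Fin n2 × Fin n1 → ℝ := fun p => lam1 p.2 * lam2 p.1 + η with hd
  have hdnz : ∀ p, d p ≠ 0 := fun p => hnz p.2 p.1
  set U : Matrix (Fin n2 × Fin n1) (Fin n2 × Fin n1) ℝ := U2 ⊗ₖ U1 with hU
  have hUT : Uᵀ = U2ᵀ ⊗ₖ U1ᵀ := by
    rw [hU, Matrix.kroneckerMap_transpose]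
  have hUU : U * Uᵀ = 1 := by
    rw [hU, hUT, ← Matrix.mul_kronecker_mul, hU1, hU2, Matrix.one_kronecker_one]
  have hUU' : Uᵀ * U = 1 := by
    rw [hU, hUT, ← Matrix.mul_kronecker_mul, hU1', hU2', Matrix.one_kronecker_one]
  have hkron : R2 ⊗ₖ R1 = U * (Matrix.diagonal lam2 ⊗ₖ Matrix.diagonal lam1) * Uᵀ := by
    rw [hR1, hR2, hU, hUT, ← Matrix.mul_kronecker_mul, ← Matrix.mul_kronecker_mul]
  have hDD : Matrix.diagonal lam2 ⊗ₖ Matrix.diagonal lam1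
      = Matrix.diagonal (fun p : Fin n2 × Fin n1 => lam2 p.1 * lam1 p.2) := by
    rw [Matrix.diagonal_kronecker_diagonal]
  have hdiag : Matrix.diagonal (fun p : Fin n2 × Fin n1 => lam2 p.1 * lam1 p.2)
      + η • (1 : Matrix (Fin n2 × Fin n1) (Fin n2 × Fin n1) ℝ) = Matrix.diagonal d := by
    ext p q
    simp only [Matrix.add_apply, Matrix.smul_apply, Matrix.diagonal_apply, Matrix.one_apply,
      smul_eq_mul]
    by_cases h : p = q <;> simp [h, hd] <;> ring
  have hRt : R2 ⊗ₖ R1 + η • (1 : Matrix (Fin n2 × Fin n1) (Fin n2 × Fin n1) ℝ)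
      = U * Matrix.diagonal d * Uᵀ := by
    have h1 : η • (1 : Matrix (Fin n2 × Fin n1) (Fin n2 × Fin n1) ℝ)
        = U * (η • (1 : Matrix (Fin n2 × Fin n1) (Fin n2 × Fin n1) ℝ)) * Uᵀ := by
      rw [Matrix.mul_smul, Matrix.mul_one, Matrix.smul_mul, hUU]
    rw [hkron, h1, ← Matrix.add_mul, ← Matrix.mul_add, hDD, hdiag]
  have hdinv : Matrix.diagonal d * Matrix.diagonal (fun p => (d p)⁻¹) = 1 := by
    rw [Matrix.diagonal_mul_diagonal]
    have : (fun p => d p * (d p)⁻¹) = fun _ : Fin n2 × Fin n1 => (1 : ℝ) :=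
      funext fun p => mul_inv_cancel₀ (hdnz p)
    rw [this, Matrix.diagonal_one]
  have hinv : (R2 ⊗ₖ R1 + η • (1 : Matrix (Fin n2 × Fin n1) (Fin n2 × Fin n1) ℝ))⁻¹
      = U * Matrix.diagonal (fun p => (d p)⁻¹) * Uᵀ := by
    apply Matrix.inv_eq_right_inv
    rw [hRt]
    calc U * Matrix.diagonal d * Uᵀ * (U * Matrix.diagonal (fun p => (d p)⁻¹) * Uᵀ)
        = U * (Matrix.diagonal d * (Uᵀ * U) * Matrix.diagonal (fun p => (d p)⁻¹)) * Uᵀ := by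
          noncomm_ring
      _ = 1 := by
          rw [hUU', Matrix.mul_one, hdinv, Matrix.mul_one, hUU]
  have hvZ : _root_.vec Y - μ • (fun _ : Fin n2 × Fin n1 => (1 : ℝ)) = _root_.vec Z := by
    funext p
    simp [_root_.vec, hZ, hJ]
  have hM : (R2 ⊗ₖ R1) * (U * Matrix.diagonal (fun p => (d p)⁻¹) * Uᵀ)
      = U * (Matrix.diagonal lam2 ⊗ₖ Matrix.diagonal lam1)
          * Matrix.diagonal (fun p => (d p)⁻¹) * Uᵀ := by
    rw [hkron]
    calc U * (Matrix.diagonal lam2 ⊗ₖ Matrix.diagonal lam1) * Uᵀ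
          * (U * Matrix.diagonal (fun p => (d p)⁻¹) * Uᵀ)
        = U * (Matrix.diagonal lam2 ⊗ₖ Matrix.diagonal lam1) * (Uᵀ * U)
            * Matrix.diagonal (fun p => (d p)⁻¹) * Uᵀ := by noncomm_ring
      _ = _ := by rw [hUU', Matrix.mul_one]
  have hvecY0 : _root_.vec (Matrix.of fun (i : Fin n1) (j : Fin n2) =>
      (d (j, i))⁻¹ * ((U1ᵀ * Z * U2) i j))
      = Matrix.diagonal (fun p => (d p)⁻¹) *ᵥ _root_.vec (U1ᵀ * Z * U2) := by
    rw [diag_mulVec]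
    funext p
    simp [_root_.vec]
  have hvecYt : _root_.vec (U1ᵀ * Z * U2) = Uᵀ *ᵥ _root_.vec Z := by
    have h := vec_conj U1ᵀ U2ᵀ Z
    rw [Matrix.transpose_transpose] at h
    rw [h, hUT]
  have hRHS : (U1 * Matrix.diagonal lam1 *
          (Matrix.of fun i j =>
            ((U1ᵀ * Z * U2) i j) / (lam1 i * lam2 j + η)) *
          Matrix.diagonal lam2 * U2ᵀ)
      = (U1 * Matrix.diagonal lam1) *
          (Matrix.of fun (i : Fin n1) (j : Fin n2) =>
            (d (j, i))⁻¹ * ((U1ᵀ * Z * U2) i j)) * (U2 * Matrix.diagonal lam2)ᵀ := by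
    have hY0 : (Matrix.of fun i j =>
        ((U1ᵀ * Z * U2) i j) / (lam1 i * lam2 j + η))
        = Matrix.of fun (i : Fin n1) (j : Fin n2) =>
          (d (j, i))⁻¹ * ((U1ᵀ * Z * U2) i j) := by
      funext i j
      simp [hd, div_eq_inv_mul]
    rw [hY0, Matrix.transpose_mul, Matrix.diagonal_transpose, Matrix.mul_assoc]
  rw [hvZ, hinv, Matrix.mulVec_mulVec, hM]
  rw [hRHS, vec_conj, hvecY0, hvecYt, Matrix.mulVec_mulVec, Matrix.mulVec_mulVec,
    Matrix.mul_kronecker_mul, ← hU]
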